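/- Let c₀, β > 0, p > 1, and let f : ℝ → (0, ∞) be a C¹ function defined on all of ℝ satisfying f'(s) + β f(s) ≥ c₀ f(s)^p for all s ∈ ℝ. Then f(s) ≤ (β/c₀)^{1/(p-1)} for all s ∈ ℝ. -/

import Mathlib

open Real

/-- If f is a positive C¹ function on ℝ with f' + βf ≥ c₀ f^p everywhere
(β, c₀ > 0, p > 1), then f(s) ≤ (β/c₀)^(1/(p-1)) for all s. -/
theorem stmt_7 (c₀ β p : ℝ) (hc₀ : 0 < c₀) (hβ : 0 < β) (hp : 1 < p)
    (f f' : ℝ → ℝ)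
    (hpos : ∀ s, 0 < f s)
    (hderiv : ∀ s, HasDerivAt f (f' s) s)
    (hf'cont : Continuous f')
    (hineq : ∀ s, c₀ * f s ^ p ≤ f' s + β * f s) :
    ∀ s, f s ≤ (β / c₀) ^ (1 / (p - 1)) := by
  by_contra hcon
  push_neg at hcon
  obtain ⟨s₀, hs₀⟩ := hcon
  have hq0 : 0 < p - 1 := by linarith
  set ε : ℝ := (p - 1) * β with hε
  have hε0 : 0 < ε := mul_pos hq0 hβ
  set g : ℝ → ℝ := fun s => f s ^ (1 - p) with hg
  have hgpos : ∀ s, 0 < g s := fun s => rpow_pos_of_pos (hpos s) _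
  set g' : ℝ → ℝ := fun s => f' s * ((1 - p) * f s ^ (-p)) with hg'
  have hgderiv : ∀ s, HasDerivAt g (g' s) s := by
    intro s
    have h1 : (1 : ℝ) - p - 1 = -p := by ring
    have := (hderiv s).rpow_const (p := 1 - p) (Or.inl (ne_of_gt (hpos s)))
    rw [h1] at this
    simpa [hg', mul_assoc] using this
  -- bound on g'
  have hgb : ∀ s, g' s ≤ (1 - p) * c₀ + ε * g s := by
    intro s
    have hf := hineq s
    have hfp : (0:ℝ) < f s ^ (-p) := rpow_pos_of_pos (hpos s) _
    have key : f' s * ((1 - p) * f s ^ (-p)) ≤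
        (c₀ * f s ^ p - β * f s) * ((1 - p) * f s ^ (-p)) := by
      have hneg : (1 - p) * f s ^ (-p) ≤ 0 := by nlinarith
      have : c₀ * f s ^ p - β * f s ≤ f' s := by linarith
      nlinarith
    have hA : f s ^ p * f s ^ (-p) = 1 := by
      rw [← Real.rpow_add (hpos s)]
      simp
    have hB : f s * f s ^ (-p) = g s := by
      nth_rewrite 1 [← Real.rpow_one (f s)]
      rw [← Real.rpow_add (hpos s)]
      simp [hg]
      ring_nf
    calc g' s ≤ (c₀ * f s ^ p - β * f s) * ((1 - p) * f s ^ (-p)) := key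
      _ = (1 - p) * c₀ * (f s ^ p * f s ^ (-p)) - (1-p) * β * (f s * f s ^ (-p)) := by ring
      _ = (1 - p) * c₀ + ε * g s := by rw [hA, hB]; ring
  set h : ℝ → ℝ := fun s => Real.exp (-ε * s) * (g s - c₀ / β) with hh
  have hhderiv : ∀ s, HasDerivAt h
      ((-ε * Real.exp (-ε * s)) * (g s - c₀ / β) + Real.exp (-ε * s) * g' s) s := by
    intro s
    have he : HasDerivAt (fun s => Real.exp (-ε * s)) (-ε * Real.exp (-ε * s)) s := by
      have := ((hasDerivAt_id s).const_mul (-ε)).exp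
      simpa [mul_comm] using this
    exact he.mul ((hgderiv s).sub_const _)
  have hhmono : Antitone h := by
    apply antitone_of_deriv_nonpos
    · exact fun s => ((hhderiv s).differentiableAt)
    · intro s
      rw [(hhderiv s).deriv]
      have hexp : (0:ℝ) < Real.exp (-ε * s) := Real.exp_pos _
      have h1 : g' s - ε * g s + (p - 1) * c₀ ≤ 0 := by
        have := hgb s; nlinarith
      have h2 : ε * (c₀ / β) = (p - 1) * c₀ := by
        field_simp [hε]
        ring
      have : (-ε * Real.exp (-ε * s)) * (g s - c₀ / β) + Real.exp (-ε * s) * g' s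
          = Real.exp (-ε * s) * (g' s - ε * g s + ε * (c₀ / β)) := by ring
      rw [this, h2]
      exact mul_nonpos_of_nonneg_of_nonpos hexp.le h1
  -- h s₀ < 0
  have hM : (0:ℝ) < (β / c₀) ^ (1 / (p - 1)) := rpow_pos_of_pos (div_pos hβ hc₀) _
  have hgs₀ : g s₀ < c₀ / β := by
    have h1 : f s₀ ^ (1 - p) < ((β / c₀) ^ (1 / (p - 1))) ^ (1 - p) :=
      rpow_lt_rpow_of_neg hM hs₀ (by linarith)
    have h2 : ((β / c₀) ^ (1 / (p - 1))) ^ (1 - p) = c₀ / β := by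
      rw [← Real.rpow_mul (div_pos hβ hc₀).le]
      have he : 1 / (p - 1) * (1 - p) = -1 := by field_simp; ring
      rw [he, Real.rpow_neg_one, inv_div]
    show f s₀ ^ (1 - p) < c₀ / β
    exact h2 ▸ h1
  have hhs₀ : h s₀ < 0 := by
    have : g s₀ - c₀ / β < 0 := by linarith
    exact mul_neg_of_pos_of_neg (Real.exp_pos _) this
  -- choose a large s₁ to contradict positivity of g
  set T : ℝ := (c₀ / β + 1) / (-h s₀) with hT
  have hT0 : 0 < T := by
    apply div_pos
    · have : 0 < c₀ / β := div_pos hc₀ hβ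
      linarith
    · linarith
  set s₁ : ℝ := max s₀ (Real.log T / ε) with hs₁
  have hexpT : T ≤ Real.exp (ε * s₁) := by
    have h1 : Real.log T ≤ ε * s₁ := by
      have : Real.log T / ε ≤ s₁ := le_max_right _ _
      calc Real.log T = ε * (Real.log T / ε) := by field_simp
        _ ≤ ε * s₁ := by nlinarith
    calc T = Real.exp (Real.log T) := (Real.exp_log hT0).symm
      _ ≤ Real.exp (ε * s₁) := Real.exp_le_exp.mpr h1
  have hle : h s₁ ≤ h s₀ := hhmono (le_max_left _ _)
  have hgs₁ : g s₁ - c₀ / β = h s₁ * Real.exp (ε * s₁) := by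
    have key : Real.exp (-ε * s₁) * Real.exp (ε * s₁) = 1 := by
      rw [← Real.exp_add]; norm_num
    calc g s₁ - c₀ / β = (g s₁ - c₀ / β) * (Real.exp (-ε * s₁) * Real.exp (ε * s₁)) := by
          rw [key, mul_one]
      _ = h s₁ * Real.exp (ε * s₁) := by simp only [hh]; ring
  have hbad : g s₁ ≤ -1 := by
    have h3 : h s₁ * Real.exp (ε * s₁) ≤ h s₀ * Real.exp (ε * s₁) :=
      mul_le_mul_of_nonneg_right hle (Real.exp_pos _).le
    have h4 : h s₀ * Real.exp (ε * s₁) ≤ h s₀ * T := by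
      apply mul_le_mul_of_nonpos_left hexpT (le_of_lt hhs₀)
    have h5 : h s₀ * T = -(c₀ / β + 1) := by
      have hne : h s₀ ≠ 0 := ne_of_lt hhs₀
      rw [hT]; field_simp
    nlinarith [hgs₁]
  exact absurd (hgpos s₁) (by linarith)
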